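/- Let q ∈ ℂ* with |q| ≠ 1. For every a ∈ ℂ(z)* there exist g ∈ ℂ(z)* and a standard element ā ∈ ℂ(z)* such that a = ā·σ_q(g)/g. -/

import Mathlib

/-!
Setting: fix `q ∈ ℂ*` with `|q| ≠ 1`.  We work with meromorphic functions on the
punctured plane `ℂ* = {z ≠ 0}`, represented as plain functions `ℂ → ℂ` together
with a `MeromorphicOn` hypothesis; all identities between meromorphic functions
are understood to hold off a countable (discrete) exceptional set (`MZeroOn`).

* `CE q` is the field `C_E` of `σ_q`-invariant meromorphic functions on `ℂ*`;
* `KE q` is the field `K_E = C_E(z)`;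
* `AlgIndepOver U K g` says that the family `g` of meromorphic functions on `U`
  is algebraically independent over the coefficient field `K`: every polynomial
  with coefficients in `K` that vanishes (as meromorphic function on `U`) at the
  family has all its coefficients zero as meromorphic functions;
* `delq` is the derivation `∂ = z·d/dz` on functions, `dRat` the corresponding
  derivation on rational functions;
* `sigmaq q` is the substitution `z ↦ qz` on rational functions `RatFunc ℂ`;
* `QDE q a f` is the q-difference equation `f(qz) = a(z)·f(z)` as an identity of
  meromorphic functions on `ℂ*` (written without denominators);
* `ordAt a c` is the order of vanishing of the rational function `a` at `c`, and
  `divE q hq a` is the elliptic divisor of `a`, an element of the free abelian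
  group on `ℂ*/q^ℤ` (realised as a finitely supported `ℤ`-valued function on the
  quotient group `ℂˣ ⧸ zpowers q`).
-/

open scoped Classical

noncomputable section

/-- The punctured complex plane ℂ*. -/
def Cstar : Set ℂ := {z : ℂ | z ≠ 0}

/-- `f` represents the zero meromorphic function on `U`:
it vanishes off a countable exceptional set. -/
def MZeroOn (U : Set ℂ) (f : ℂ → ℂ) : Prop :=
  ∃ S : Set ℂ, S.Countable ∧ ∀ z ∈ U \ S, f z = 0

/-- `f` is a nonzero meromorphic function on `U`. -/
def MerNonzero (U : Set ℂ) (f : ℂ → ℂ) : Prop :=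
  MeromorphicOn f U ∧ ¬ MZeroOn U f

/-- The derivation ∂ = z·d/dz. -/
def delq (f : ℂ → ℂ) : ℂ → ℂ := fun z => z * deriv f z

/-- The field C_E of σ_q-invariant meromorphic functions on ℂ*. -/
def CE (q : ℂ) : Set (ℂ → ℂ) :=
  {c | MeromorphicOn c Cstar ∧ ∀ z : ℂ, c (q * z) = c z}

/-- Evaluation of a polynomial with function coefficients at the coordinate z. -/
def evalz (P : Polynomial (ℂ → ℂ)) : ℂ → ℂ :=
  Polynomial.eval (fun z : ℂ => z) P

/-- The field K_E = C_E(z): quotients of polynomials in z with coefficients in C_E. -/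
def KE (q : ℂ) : Set (ℂ → ℂ) :=
  {f | ∃ Np Dp : Polynomial (ℂ → ℂ),
        (∀ i, Np.coeff i ∈ CE q) ∧ (∀ i, Dp.coeff i ∈ CE q) ∧
        ¬ MZeroOn Cstar (evalz Dp) ∧
        MZeroOn Cstar (fun z => f z * evalz Dp z - evalz Np z)}

/-- The family `g` of meromorphic functions on `U` is algebraically independent
over the set `K` of coefficient functions. -/
def AlgIndepOver (U : Set ℂ) (K : Set (ℂ → ℂ)) {ι : Type} (g : ι → ℂ → ℂ) : Prop :=
  ∀ P : MvPolynomial ι (ℂ → ℂ),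
    (∀ m, MvPolynomial.coeff m P ∈ K) →
    MZeroOn U (MvPolynomial.eval g P) →
    ∀ m, MZeroOn U (MvPolynomial.coeff m P)

/-- σ_q acting on rational functions: (σ_q a)(z) = a(qz). -/
def sigmaq (q : ℂ) (a : RatFunc ℂ) : RatFunc ℂ :=
  algebraMap (Polynomial ℂ) (RatFunc ℂ) (a.num.comp (Polynomial.C q * Polynomial.X)) /
    algebraMap (Polynomial ℂ) (RatFunc ℂ) (a.denom.comp (Polynomial.C q * Polynomial.X))

/-- The q-difference equation f(qz) = a(z)·f(z), as an identity of meromorphic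
functions on ℂ* (denominators cleared). -/
def QDE (q : ℂ) (a : RatFunc ℂ) (f : ℂ → ℂ) : Prop :=
  MZeroOn Cstar (fun z => f (q * z) * Polynomial.eval z a.denom - Polynomial.eval z a.num * f z)

/-- Order of vanishing of a rational function at a point. -/
def ordAt (a : RatFunc ℂ) (c : ℂ) : ℤ :=
  (Polynomial.rootMultiplicity c a.num : ℤ) - (Polynomial.rootMultiplicity c a.denom : ℤ)

/-- The elliptic divisor of a rational function: the image in Div(ℂ*/q^ℤ) of the
part of its divisor prime to 0, as a (finitely supported) ℤ-valued function on
the quotient group ℂˣ/q^ℤ. -/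
def divE (q : ℂ) (hq : q ≠ 0) (a : RatFunc ℂ) :
    (ℂˣ ⧸ Subgroup.zpowers (Units.mk0 q hq)) → ℤ := fun c =>
  ∑ᶠ α : ℂˣ,
    if (QuotientGroup.mk α : ℂˣ ⧸ Subgroup.zpowers (Units.mk0 q hq)) = c then
      ordAt a (α : ℂ) else 0

/-- An element of ℂ(z)* is standard if no two points of its divisor away from 0
are congruent modulo q^ℤ: if c ∈ ℂ* is a zero or pole of a and m ≠ 0, then q^m·c
is not a zero or pole of a. -/
def StandardQ (q : ℂ) (a : RatFunc ℂ) : Prop :=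
  ∀ c : ℂ, c ≠ 0 → ordAt a c ≠ 0 → ∀ m : ℤ, m ≠ 0 → ordAt a (q ^ m * c) = 0

/-- The derivation ∂ = z·d/dz on rational functions. -/
def dRat (a : RatFunc ℂ) : RatFunc ℂ :=
  RatFunc.X *
    ((algebraMap (Polynomial ℂ) (RatFunc ℂ) (Polynomial.derivative a.num) *
        algebraMap (Polynomial ℂ) (RatFunc ℂ) a.denom -
      algebraMap (Polynomial ℂ) (RatFunc ℂ) a.num *
        algebraMap (Polynomial ℂ) (RatFunc ℂ) (Polynomial.derivative a.denom)) /
      algebraMap (Polynomial ℂ) (RatFunc ℂ) a.denom ^ 2)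

namespace Statement14Aux

open Polynomial

lemma ordAt_div (p s : Polynomial ℂ) (hp : p ≠ 0) (hs : s ≠ 0) (c : ℂ) :
    ordAt (algebraMap (Polynomial ℂ) (RatFunc ℂ) p / algebraMap (Polynomial ℂ) (RatFunc ℂ) s) c
      = (Polynomial.rootMultiplicity c p : ℤ) - (Polynomial.rootMultiplicity c s : ℤ) := by
  set A := algebraMap (Polynomial ℂ) (RatFunc ℂ)
  set a := A p / A s with hadef
  have hAs : A s ≠ 0 := by
    simpa [A, map_eq_zero_iff _ (IsFractionRing.injective (Polynomial ℂ) (RatFunc ℂ))] using hs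
  have ha : a ≠ 0 := by
    apply div_ne_zero _ hAs
    simpa [A, map_eq_zero_iff _ (IsFractionRing.injective (Polynomial ℂ) (RatFunc ℂ))] using hp
  have hd : A a.denom ≠ 0 := by
    simp [A, map_eq_zero_iff _ (IsFractionRing.injective (Polynomial ℂ) (RatFunc ℂ)), RatFunc.denom_ne_zero]
  have h1 : A a.num = a * A a.denom := (div_eq_iff hd).mp (RatFunc.num_div_denom a)
  have key : A (a.num * s) = A (p * a.denom) := by
    rw [map_mul, map_mul, h1]
    calc a * A a.denom * A s = (a * A s) * A a.denom := by ring
      _ = A p * A a.denom := by rw [hadef, div_mul_cancel₀ _ hAs]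
  have key2 : a.num * s = p * a.denom := by
    exact IsFractionRing.injective (Polynomial ℂ) (RatFunc ℂ) key
  have hna : a.num ≠ 0 := RatFunc.num_ne_zero ha
  have hda : a.denom ≠ 0 := RatFunc.denom_ne_zero a
  have h1 : rootMultiplicity c (a.num * s) = rootMultiplicity c (p * a.denom) := by rw [key2]
  rw [rootMultiplicity_mul (mul_ne_zero hna hs), rootMultiplicity_mul (mul_ne_zero hp hda)] at h1
  simp only [ordAt]
  omega

lemma ordAt_mul (a b : RatFunc ℂ) (ha : a ≠ 0) (hb : b ≠ 0) (c : ℂ) :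
    ordAt (a * b) c = ordAt a c + ordAt b c := by
  have hna := RatFunc.num_ne_zero ha
  have hnb := RatFunc.num_ne_zero hb
  have hda := RatFunc.denom_ne_zero a
  have hdb := RatFunc.denom_ne_zero b
  have hab : a * b = algebraMap (Polynomial ℂ) (RatFunc ℂ) (a.num * b.num) /
      algebraMap (Polynomial ℂ) (RatFunc ℂ) (a.denom * b.denom) := by
    rw [map_mul, map_mul, ← div_mul_div_comm, RatFunc.num_div_denom, RatFunc.num_div_denom]
  rw [hab, ordAt_div _ _ (mul_ne_zero hna hnb) (mul_ne_zero hda hdb),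
    rootMultiplicity_mul (mul_ne_zero hna hnb), rootMultiplicity_mul (mul_ne_zero hda hdb)]
  simp only [ordAt]
  push_cast
  ring

lemma ordAt_inv (a : RatFunc ℂ) (ha : a ≠ 0) (c : ℂ) : ordAt a⁻¹ c = - ordAt a c := by
  have h := ordAt_mul a a⁻¹ ha (inv_ne_zero ha) c
  rw [mul_inv_cancel₀ ha] at h
  have h1 : ordAt 1 c = 0 := by
    have : (1 : RatFunc ℂ) = algebraMap (Polynomial ℂ) (RatFunc ℂ) 1 /
        algebraMap (Polynomial ℂ) (RatFunc ℂ) 1 := by simp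
    rw [this, ordAt_div _ _ one_ne_zero one_ne_zero]
    simp [Polynomial.rootMultiplicity_eq_zero]
  omega

lemma ordAt_pow (a : RatFunc ℂ) (ha : a ≠ 0) (n : ℕ) (c : ℂ) :
    ordAt (a ^ n) c = n * ordAt a c := by
  induction n with
  | zero =>
    have h1 : ordAt 1 c = 0 := by
      have h := ordAt_inv 1 one_ne_zero c
      simp at h
      have := ordAt_mul a a⁻¹ ha (inv_ne_zero ha) c
      rw [mul_inv_cancel₀ ha, ordAt_inv a ha] at this
      omega
    simpa using h1
  | succ n ih =>
    rw [pow_succ, ordAt_mul _ _ (pow_ne_zero _ ha) ha, ih]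
    push_cast; ring

lemma ordAt_zpow (a : RatFunc ℂ) (ha : a ≠ 0) (k : ℤ) (c : ℂ) :
    ordAt (a ^ k) c = k * ordAt a c := by
  cases k with
  | ofNat n => simpa using ordAt_pow a ha n c
  | negSucc n =>
    rw [zpow_negSucc, ordAt_inv _ (pow_ne_zero _ ha), ordAt_pow a ha]
    simp [Int.negSucc_eq]; ring

lemma ordAt_linear (d c : ℂ) :
    ordAt (RatFunc.X - RatFunc.C d) c = if c = d then 1 else 0 := by
  have h : (RatFunc.X - RatFunc.C d : RatFunc ℂ) =
      algebraMap (Polynomial ℂ) (RatFunc ℂ) (Polynomial.X - Polynomial.C d) /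
      algebraMap (Polynomial ℂ) (RatFunc ℂ) 1 := by
    rw [map_one, div_one, map_sub, RatFunc.algebraMap_X, RatFunc.algebraMap_C]
  rw [h, ordAt_div _ _ (Polynomial.X_sub_C_ne_zero d) one_ne_zero]
  simp [Polynomial.rootMultiplicity_X_sub_C, Polynomial.rootMultiplicity_eq_zero]

variable {q : ℂ}

lemma comp_qX_ne_zero (hq0 : q ≠ 0) {p : Polynomial ℂ} (hp : p ≠ 0) :
    p.comp (Polynomial.C q * Polynomial.X) ≠ 0 := by
  intro h
  rw [Polynomial.comp_eq_zero_iff] at h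
  rcases h with h | ⟨-, h⟩
  · exact hp h
  · apply mul_ne_zero (Polynomial.C_ne_zero.mpr hq0) Polynomial.X_ne_zero
    rw [h]; simp

lemma cross_eq (p s : Polynomial ℂ) (hs : s ≠ 0) :
    (algebraMap (Polynomial ℂ) (RatFunc ℂ) p / algebraMap (Polynomial ℂ) (RatFunc ℂ) s).num * s
      = p * (algebraMap (Polynomial ℂ) (RatFunc ℂ) p
          / algebraMap (Polynomial ℂ) (RatFunc ℂ) s).denom := by
  set A := algebraMap (Polynomial ℂ) (RatFunc ℂ)
  by_cases hp : p = 0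
  · simp [hp, A]
  set a := A p / A s with hadef
  have hAs : A s ≠ 0 := by simpa [A] using hs
  have hd : A a.denom ≠ 0 := by simp [A, RatFunc.denom_ne_zero]
  have h1 : A a.num = a * A a.denom := (div_eq_iff hd).mp (RatFunc.num_div_denom a)
  have key : A (a.num * s) = A (p * a.denom) := by
    rw [map_mul, map_mul, h1]
    calc a * A a.denom * A s = (a * A s) * A a.denom := by ring
      _ = A p * A a.denom := by rw [hadef, div_mul_cancel₀ _ hAs]
  exact IsFractionRing.injective (Polynomial ℂ) (RatFunc ℂ) key

lemma sigmaq_div (hq0 : q ≠ 0) (p s : Polynomial ℂ) (hs : s ≠ 0) :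
    sigmaq q (algebraMap (Polynomial ℂ) (RatFunc ℂ) p / algebraMap (Polynomial ℂ) (RatFunc ℂ) s)
      = algebraMap (Polynomial ℂ) (RatFunc ℂ) (p.comp (Polynomial.C q * Polynomial.X))
        / algebraMap (Polynomial ℂ) (RatFunc ℂ) (s.comp (Polynomial.C q * Polynomial.X)) := by
  set A := algebraMap (Polynomial ℂ) (RatFunc ℂ)
  by_cases hp : p = 0
  · simp [hp, sigmaq, A, RatFunc.num_div, RatFunc.denom_div]
  set a := A p / A s with hadef
  have ha : a ≠ 0 := by
    apply div_ne_zero <;> simpa [A]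
  have key := cross_eq p s hs
  have key2 : a.num.comp (Polynomial.C q * Polynomial.X) * s.comp (Polynomial.C q * Polynomial.X)
      = p.comp (Polynomial.C q * Polynomial.X) * a.denom.comp (Polynomial.C q * Polynomial.X) := by
    have := congrArg (fun t => t.comp (Polynomial.C q * Polynomial.X)) key
    simpa only [Polynomial.mul_comp, ← hadef] using this
  have hns : A (s.comp (Polynomial.C q * Polynomial.X)) ≠ 0 := by
    simpa [A] using comp_qX_ne_zero hq0 hs
  have hnd : A (a.denom.comp (Polynomial.C q * Polynomial.X)) ≠ 0 := by
    simpa [A] using comp_qX_ne_zero hq0 (RatFunc.denom_ne_zero a)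
  rw [sigmaq, div_eq_div_iff hnd hns, ← map_mul, ← map_mul, key2]

lemma sigmaq_ne_zero (hq0 : q ≠ 0) {a : RatFunc ℂ} (ha : a ≠ 0) : sigmaq q a ≠ 0 := by
  have h1 : algebraMap (Polynomial ℂ) (RatFunc ℂ)
      (a.num.comp (Polynomial.C q * Polynomial.X)) ≠ 0 := by
    simpa using comp_qX_ne_zero hq0 (RatFunc.num_ne_zero ha)
  have h2 : algebraMap (Polynomial ℂ) (RatFunc ℂ)
      (a.denom.comp (Polynomial.C q * Polynomial.X)) ≠ 0 := by
    simpa using comp_qX_ne_zero hq0 (RatFunc.denom_ne_zero a)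
  exact div_ne_zero h1 h2

lemma sigmaq_mul (hq0 : q ≠ 0) (a b : RatFunc ℂ) :
    sigmaq q (a * b) = sigmaq q a * sigmaq q b := by
  set A := algebraMap (Polynomial ℂ) (RatFunc ℂ)
  by_cases ha : a = 0
  · simp [ha, sigmaq]
  by_cases hb : b = 0
  · simp [hb, sigmaq]
  have hab : a * b = A (a.num * b.num) / A (a.denom * b.denom) := by
    rw [map_mul, map_mul, ← div_mul_div_comm, RatFunc.num_div_denom, RatFunc.num_div_denom]
  conv_lhs => rw [hab]
  rw [sigmaq_div hq0 _ _ (mul_ne_zero (RatFunc.denom_ne_zero a) (RatFunc.denom_ne_zero b))]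
  conv_rhs => rw [show sigmaq q a = sigmaq q (A a.num / A a.denom) from by
      rw [RatFunc.num_div_denom],
    show sigmaq q b = sigmaq q (A b.num / A b.denom) from by rw [RatFunc.num_div_denom],
    sigmaq_div hq0 _ _ (RatFunc.denom_ne_zero a), sigmaq_div hq0 _ _ (RatFunc.denom_ne_zero b)]
  rw [Polynomial.mul_comp, Polynomial.mul_comp, map_mul, map_mul, div_mul_div_comm]

lemma sigmaq_one (hq0 : q ≠ 0) : sigmaq q (1 : RatFunc ℂ) = 1 := by
  simp [sigmaq, RatFunc.num_one, RatFunc.denom_one]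

lemma sigmaq_inv (hq0 : q ≠ 0) (a : RatFunc ℂ) : sigmaq q a⁻¹ = (sigmaq q a)⁻¹ := by
  by_cases ha : a = 0
  · simp [ha, sigmaq, RatFunc.num_zero, RatFunc.denom_zero]
  have h := sigmaq_mul hq0 a a⁻¹
  rw [mul_inv_cancel₀ ha, sigmaq_one hq0] at h
  exact eq_inv_of_mul_eq_one_right h.symm

lemma sigmaq_zpow (hq0 : q ≠ 0) (a : RatFunc ℂ) (k : ℤ) :
    sigmaq q (a ^ k) = sigmaq q a ^ k := by
  have hpow : ∀ n : ℕ, sigmaq q (a ^ n) = sigmaq q a ^ n := by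
    intro n
    induction n with
    | zero => simpa using sigmaq_one hq0
    | succ n ih => rw [pow_succ, pow_succ, sigmaq_mul hq0, ih]
  cases k with
  | ofNat n => simpa using hpow n
  | negSucc n => rw [zpow_negSucc, zpow_negSucc, sigmaq_inv hq0, hpow]

lemma coboundary (hq0 : q ≠ 0) (d : ℂ) (m : ℕ) :
    ∃ G : RatFunc ℂ, G ≠ 0 ∧
      sigmaq q G / G = (RatFunc.X - RatFunc.C d) / (RatFunc.X - RatFunc.C (q ^ m * d)) := by
  set A := algebraMap (Polynomial ℂ) (RatFunc ℂ) with hA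
  have hinj : Function.Injective A := IsFractionRing.injective (Polynomial ℂ) (RatFunc ℂ)
  set P : Polynomial ℂ := ∏ j ∈ Finset.range m, (Polynomial.X - Polynomial.C (q ^ (j + 1) * d))
    with hP
  set Q0 : Polynomial ℂ := ∏ j ∈ Finset.range m, (Polynomial.X - Polynomial.C (q ^ j * d))
    with hQ0
  have hPne : P ≠ 0 := by
    rw [hP]
    exact Finset.prod_ne_zero_iff.mpr fun j _ => Polynomial.X_sub_C_ne_zero _
  have hQ0ne : Q0 ≠ 0 := by
    rw [hQ0]
    exact Finset.prod_ne_zero_iff.mpr fun j _ => Polynomial.X_sub_C_ne_zero _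
  have hXm : (Polynomial.X ^ m : Polynomial ℂ) ≠ 0 := pow_ne_zero _ Polynomial.X_ne_zero
  have hANe : ∀ p : Polynomial ℂ, p ≠ 0 → A p ≠ 0 := fun p hp =>
    (map_ne_zero_iff A hinj).mpr hp
  refine ⟨A P / A (Polynomial.X ^ m), div_ne_zero (hANe _ hPne) (hANe _ hXm), ?_⟩
  rw [sigmaq_div hq0 _ _ hXm]
  have hPcomp : P.comp (Polynomial.C q * Polynomial.X) = Polynomial.C (q ^ m) * Q0 := by
    rw [hP, Polynomial.prod_comp, hQ0]
    rw [show (Polynomial.C (q ^ m) : Polynomial ℂ) = ∏ _j ∈ Finset.range m, Polynomial.C q from by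
      rw [Finset.prod_const, ← map_pow, Finset.card_range]]
    rw [← Finset.prod_mul_distrib]
    refine Finset.prod_congr rfl fun j _ => ?_
    rw [Polynomial.sub_comp, Polynomial.X_comp, Polynomial.C_comp, mul_sub, ← Polynomial.C_mul]
    congr 2
    ring
  have hXcomp : (Polynomial.X ^ m : Polynomial ℂ).comp (Polynomial.C q * Polynomial.X)
      = Polynomial.C (q ^ m) * Polynomial.X ^ m := by
    rw [Polynomial.pow_comp, Polynomial.X_comp, mul_pow, map_pow]
  rw [hPcomp, hXcomp]
  have htel : Q0 * (Polynomial.X - Polynomial.C (q ^ m * d))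
      = (Polynomial.X - Polynomial.C d) * P := by
    have h1 := Finset.prod_range_succ
      (fun j => Polynomial.X - Polynomial.C (q ^ j * d)) m
    have h2 := Finset.prod_range_succ'
      (fun j => Polynomial.X - Polynomial.C (q ^ j * d)) m
    rw [h2] at h1
    simpa [hQ0, hP, mul_comm] using h1.symm
  have hqm : (Polynomial.C (q ^ m) : Polynomial ℂ) ≠ 0 := by
    simpa using pow_ne_zero m hq0
  have hL : (RatFunc.X - RatFunc.C d : RatFunc ℂ) = A (Polynomial.X - Polynomial.C d) := by
    rw [map_sub, RatFunc.algebraMap_X, RatFunc.algebraMap_C]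
  have hL' : (RatFunc.X - RatFunc.C (q ^ m * d) : RatFunc ℂ)
      = A (Polynomial.X - Polynomial.C (q ^ m * d)) := by
    rw [map_sub, RatFunc.algebraMap_X, RatFunc.algebraMap_C]
  rw [hL, hL']
  have key : (A (Polynomial.C (q ^ m) * Q0) / A (Polynomial.C (q ^ m) * Polynomial.X ^ m))
      / (A P / A (Polynomial.X ^ m)) = A Q0 / A P := by
    rw [map_mul, map_mul]
    rw [div_div_div_comm]
    rw [show A (Polynomial.C (q ^ m)) * A (Polynomial.X ^ m) / A (Polynomial.X ^ m)
        = A (Polynomial.C (q ^ m)) from mul_div_cancel_right₀ _ (hANe _ hXm)]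
    rw [mul_div_assoc, mul_div_cancel_left₀ _ (hANe _ hqm)]
  rw [key, div_eq_div_iff (hANe _ hPne) (hANe _ (Polynomial.X_sub_C_ne_zero (q ^ m * d))),
    ← map_mul, ← map_mul]
  exact congrArg A htel

def Tset (a : RatFunc ℂ) : Set ℂ := {c | c ≠ 0 ∧ ordAt a c ≠ 0}

lemma Tset_finite (a : RatFunc ℂ) (ha : a ≠ 0) : (Tset a).Finite := by
  have hn := RatFunc.num_ne_zero ha
  have hd := RatFunc.denom_ne_zero a
  apply Set.Finite.subset (Polynomial.finite_setOf_isRoot (mul_ne_zero hn hd))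
  rintro c ⟨-, hord⟩
  simp only [Set.mem_setOf_eq, Polynomial.IsRoot, Polynomial.eval_mul]
  by_cases h1 : Polynomial.rootMultiplicity c a.num = 0
  · have h2 : Polynomial.rootMultiplicity c a.denom ≠ 0 := by
      simp only [ordAt] at hord; omega
    have := (Polynomial.rootMultiplicity_pos hd).mp (Nat.pos_of_ne_zero h2)
    rw [this]; ring
  · have := (Polynomial.rootMultiplicity_pos hn).mp (Nat.pos_of_ne_zero h1)
    rw [this]; ring

lemma linear_ne_zero' (d : ℂ) : (RatFunc.X - RatFunc.C d : RatFunc ℂ) ≠ 0 := by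
  have h : (RatFunc.X - RatFunc.C d : RatFunc ℂ)
      = algebraMap (Polynomial ℂ) (RatFunc ℂ) (Polynomial.X - Polynomial.C d) := by
    rw [map_sub, RatFunc.algebraMap_X, RatFunc.algebraMap_C]
  rw [h, map_ne_zero_iff _ (IsFractionRing.injective (Polynomial ℂ) (RatFunc ℂ))]
  exact Polynomial.X_sub_C_ne_zero d

lemma main_aux (hq0 : q ≠ 0) (hq : ‖q‖ ≠ 1) :
    ∀ n : ℕ, ∀ a : RatFunc ℂ, a ≠ 0 → (Tset a).ncard ≤ n →
      ∃ g abar : RatFunc ℂ, g ≠ 0 ∧ abar ≠ 0 ∧ StandardQ q abar ∧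
        a = abar * sigmaq q g / g := by
  intro n
  induction n using Nat.strong_induction_on with
  | _ n ih =>
  intro a ha hcard
  by_cases hstd : StandardQ q a
  · exact ⟨1, a, one_ne_zero, ha, hstd, by rw [sigmaq_one hq0]; simp⟩
  simp only [StandardQ, not_forall] at hstd
  obtain ⟨c, hc0, hc, m, hm, hc'⟩ := hstd
  -- normalize to a positive power
  obtain ⟨d, mm, hd0, hmm1, hordd, hordc'⟩ :
      ∃ (d : ℂ) (mm : ℕ), d ≠ 0 ∧ 1 ≤ mm ∧ ordAt a d ≠ 0 ∧ ordAt a (q ^ mm * d) ≠ 0 := by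
    rcases lt_or_gt_of_ne hm with hmneg | hmpos
    · refine ⟨q ^ m * c, (-m).toNat, mul_ne_zero (zpow_ne_zero _ hq0) hc0, by omega, hc', ?_⟩
      have : q ^ ((-m).toNat : ℕ) * (q ^ m * c) = c := by
        rw [← zpow_natCast q ((-m).toNat), ← mul_assoc, ← zpow_add₀ hq0,
          Int.toNat_of_nonneg (by omega : (0:ℤ) ≤ -m)]
        simp
      rw [this]; exact hc
    · refine ⟨c, m.toNat, hc0, by omega, hc, ?_⟩
      have : q ^ (m.toNat : ℕ) * c = q ^ m * c := by
        rw [← zpow_natCast q m.toNat, Int.toNat_of_nonneg (by omega : (0:ℤ) ≤ m)]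
      rw [this]; exact hc'
  set c' := q ^ mm * d with hc'def
  have hc'0 : c' ≠ 0 := mul_ne_zero (pow_ne_zero _ hq0) hd0
  have hne : c' ≠ d := by
    intro h
    have hqm1 : q ^ mm = 1 := by
      have h3 : q ^ mm * d = 1 * d := by rw [one_mul]; exact h
      exact mul_right_cancel₀ hd0 h3
    have habs : ‖q‖ ^ mm = 1 := by
      rw [← norm_pow, hqm1, norm_one]
    rcases hq.lt_or_gt with hlt | hgt
    · have : ‖q‖ ^ mm < 1 :=
        pow_lt_one₀ (norm_nonneg _) hlt (by omega)
      rw [habs] at this; exact lt_irrefl _ this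
    · have : 1 < ‖q‖ ^ mm := one_lt_pow₀ hgt (by omega)
      rw [habs] at this; exact lt_irrefl _ this
  set k := ordAt a d with hk
  set L : RatFunc ℂ := RatFunc.X - RatFunc.C d with hL
  set L' : RatFunc ℂ := RatFunc.X - RatFunc.C c' with hL'
  have hLne : L ≠ 0 := linear_ne_zero' d
  have hL'ne : L' ≠ 0 := linear_ne_zero' c'
  have hdivne : L' / L ≠ 0 := div_ne_zero hL'ne hLne
  set a' := a * (L' / L) ^ k with ha'def
  have ha' : a' ≠ 0 := mul_ne_zero ha (zpow_ne_zero _ hdivne)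
  have hord' : ∀ e : ℂ, ordAt a' e = ordAt a e +
      k * ((if e = c' then 1 else 0) - (if e = d then 1 else 0)) := by
    intro e
    rw [ha'def, ordAt_mul _ _ ha (zpow_ne_zero _ hdivne),
      ordAt_zpow _ hdivne, div_eq_mul_inv, ordAt_mul _ _ hL'ne (inv_ne_zero hLne),
      ordAt_inv _ hLne, hL, hL', ordAt_linear, ordAt_linear]
    ring
  have hsub : Tset a' ⊆ Tset a \ {d} := by
    rintro e ⟨he0, he⟩
    rw [hord' e] at he
    by_cases hed : e = d
    · exfalso
      rw [hed, if_neg (fun h => hne h.symm), if_pos rfl] at he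
      simp only [hk] at he
      omega
    refine ⟨⟨he0, ?_⟩, hed⟩
    by_cases hec : e = c'
    · rw [hec]; exact hordc'
    · rw [if_neg hec, if_neg hed] at he
      simpa using he
  have hdmem : d ∈ Tset a := ⟨hd0, hordd⟩
  have hfin := Tset_finite a ha
  have hlt : (Tset a').ncard < n := by
    calc (Tset a').ncard ≤ (Tset a \ {d}).ncard :=
          Set.ncard_le_ncard hsub (hfin.subset Set.diff_subset)
      _ < (Tset a).ncard := Set.ncard_diff_singleton_lt_of_mem hdmem hfin
      _ ≤ n := hcard
  obtain ⟨g', abar, hg', habar0, hstd', heq'⟩ := ih _ hlt a' ha' le_rfl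
  obtain ⟨G, hG, hGe⟩ := coboundary hq0 d mm
  rw [← hc'def, ← hL, ← hL'] at hGe
  refine ⟨g' * G ^ k, abar, mul_ne_zero hg' (zpow_ne_zero _ hG), habar0, hstd', ?_⟩
  have haeq : a = a' * (L / L') ^ k := by
    rw [ha'def, mul_assoc, ← mul_zpow, div_mul_div_comm, mul_comm L' L,
      div_self (mul_ne_zero hLne hL'ne), one_zpow, mul_one]
  calc a = a' * (L / L') ^ k := haeq
    _ = abar * sigmaq q g' / g' * (sigmaq q G / G) ^ k := by rw [heq', hGe]
    _ = abar * (sigmaq q g' * sigmaq q G ^ k) / (g' * G ^ k) := by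
        rw [div_zpow, div_mul_div_comm, mul_assoc]
    _ = abar * sigmaq q (g' * G ^ k) / (g' * G ^ k) := by
        rw [sigmaq_mul hq0, sigmaq_zpow hq0]

end Statement14Aux

/-- Lemme 4.7, point 1. Every `a ∈ ℂ(z)*` has a standard form:
there exist `g ∈ ℂ(z)*` and a standard `ā ∈ ℂ(z)*` with `a = ā·σ_q(g)/g`. -/
theorem statement14 (q : ℂ) (hq0 : q ≠ 0) (hq : ‖q‖ ≠ 1)
    (a : RatFunc ℂ) (ha : a ≠ 0) :
    ∃ g abar : RatFunc ℂ, g ≠ 0 ∧ abar ≠ 0 ∧ StandardQ q abar ∧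
      a = abar * sigmaq q g / g := by
  exact Statement14Aux.main_aux hq0 hq (Statement14Aux.Tset a).ncard a ha le_rfl
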